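/- For every y > (1 + √3)/π, the second derivative of the function g(y) = 2(e^{πy} − 1)² − 4πy e^{πy}(e^{πy} − 1) + π² y² e^{πy}(e^{πy} + 1) satisfies g''(y) > 0. -/

import Mathlib

/-- The auxiliary function `g(y) = 2(e^{πy} − 1)² − 4πy e^{πy}(e^{πy} − 1)
+ π² y² e^{πy}(e^{πy} + 1)`. -/
noncomputable def gAux (y : ℝ) : ℝ :=
  2 * (Real.exp (Real.pi * y) - 1) ^ 2 -
    4 * Real.pi * y * Real.exp (Real.pi * y) * (Real.exp (Real.pi * y) - 1) +
    Real.pi ^ 2 * y ^ 2 * Real.exp (Real.pi * y) * (Real.exp (Real.pi * y) + 1)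

noncomputable def gAux1 (x : ℝ) : ℝ :=
  -6 * Real.pi ^ 2 * x * Real.exp (Real.pi * x) ^ 2 +
    6 * Real.pi ^ 2 * x * Real.exp (Real.pi * x) +
    2 * Real.pi ^ 3 * x ^ 2 * Real.exp (Real.pi * x) ^ 2 +
    Real.pi ^ 3 * x ^ 2 * Real.exp (Real.pi * x)

noncomputable def gAux2 (x : ℝ) : ℝ :=
  Real.pi ^ 2 * Real.exp (Real.pi * x) ^ 2 *
      (4 * Real.pi ^ 2 * x ^ 2 - 8 * Real.pi * x - 6) +
    Real.pi ^ 2 * Real.exp (Real.pi * x) * (Real.pi ^ 2 * x ^ 2 + 8 * Real.pi * x + 6)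

lemma hasDerivAt_exp_pi (x : ℝ) :
    HasDerivAt (fun t => Real.exp (Real.pi * t)) (Real.pi * Real.exp (Real.pi * x)) x := by
  simpa [mul_comm] using ((hasDerivAt_id' (𝕜 := ℝ) (x := x)).const_mul Real.pi).exp

lemma gAux_hasDerivAt (x : ℝ) : HasDerivAt gAux (gAux1 x) x := by
  have hE := hasDerivAt_exp_pi x
  have hid : HasDerivAt (fun t : ℝ => t) 1 x := hasDerivAt_id' x
  have h1 : HasDerivAt (fun t => 2 * (Real.exp (Real.pi * t) - 1) ^ 2)
      (2 * (2 * (Real.exp (Real.pi * x) - 1) * (Real.pi * Real.exp (Real.pi * x)))) x :=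
    (((hE.sub_const 1).pow 2).const_mul 2).congr_deriv (by ring)
  have h2 : HasDerivAt (fun t =>
        4 * Real.pi * t * Real.exp (Real.pi * t) * (Real.exp (Real.pi * t) - 1))
      ((4 * Real.pi * Real.exp (Real.pi * x) +
          4 * Real.pi * x * (Real.pi * Real.exp (Real.pi * x))) *
          (Real.exp (Real.pi * x) - 1) +
        4 * Real.pi * x * Real.exp (Real.pi * x) * (Real.pi * Real.exp (Real.pi * x))) x :=
    (((hid.const_mul (4 * Real.pi)).mul hE).mul (hE.sub_const 1)).congr_deriv (by simp only [Pi.mul_apply, Pi.pow_apply]; ring)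
  have h3 : HasDerivAt (fun t =>
        Real.pi ^ 2 * t ^ 2 * Real.exp (Real.pi * t) * (Real.exp (Real.pi * t) + 1))
      ((Real.pi ^ 2 * (2 * x) * Real.exp (Real.pi * x) +
          Real.pi ^ 2 * x ^ 2 * (Real.pi * Real.exp (Real.pi * x))) *
          (Real.exp (Real.pi * x) + 1) +
        Real.pi ^ 2 * x ^ 2 * Real.exp (Real.pi * x) * (Real.pi * Real.exp (Real.pi * x))) x :=
    ((((hasDerivAt_pow 2 x).const_mul (Real.pi ^ 2)).mul hE).mul
      (hE.add_const 1)).congr_deriv (by simp only [Pi.mul_apply, Pi.pow_apply]; ring)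
  exact ((h1.sub h2).add h3).congr_deriv (by unfold gAux1; ring)

lemma gAux1_hasDerivAt (x : ℝ) : HasDerivAt gAux1 (gAux2 x) x := by
  have hE := hasDerivAt_exp_pi x
  have hid : HasDerivAt (fun t : ℝ => t) 1 x := hasDerivAt_id' x
  have h1 : HasDerivAt (fun t => -6 * Real.pi ^ 2 * t * Real.exp (Real.pi * t) ^ 2)
      (-6 * Real.pi ^ 2 * Real.exp (Real.pi * x) ^ 2 +
        -6 * Real.pi ^ 2 * x *
          (2 * Real.exp (Real.pi * x) * (Real.pi * Real.exp (Real.pi * x)))) x :=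
    ((hid.const_mul (-6 * Real.pi ^ 2)).mul (hE.pow 2)).congr_deriv (by simp only [Pi.mul_apply, Pi.pow_apply]; ring)
  have h2 : HasDerivAt (fun t => 6 * Real.pi ^ 2 * t * Real.exp (Real.pi * t))
      (6 * Real.pi ^ 2 * Real.exp (Real.pi * x) +
        6 * Real.pi ^ 2 * x * (Real.pi * Real.exp (Real.pi * x))) x :=
    ((hid.const_mul (6 * Real.pi ^ 2)).mul hE).congr_deriv (by ring)
  have h3 : HasDerivAt (fun t => 2 * Real.pi ^ 3 * t ^ 2 * Real.exp (Real.pi * t) ^ 2)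
      (2 * Real.pi ^ 3 * (2 * x) * Real.exp (Real.pi * x) ^ 2 +
        2 * Real.pi ^ 3 * x ^ 2 *
          (2 * Real.exp (Real.pi * x) * (Real.pi * Real.exp (Real.pi * x)))) x :=
    (((hasDerivAt_pow 2 x).const_mul (2 * Real.pi ^ 3)).mul (hE.pow 2)).congr_deriv (by simp only [Pi.mul_apply, Pi.pow_apply]; ring)
  have h4 : HasDerivAt (fun t => Real.pi ^ 3 * t ^ 2 * Real.exp (Real.pi * t))
      (Real.pi ^ 3 * (2 * x) * Real.exp (Real.pi * x) +
        Real.pi ^ 3 * x ^ 2 * (Real.pi * Real.exp (Real.pi * x))) x :=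
    (((hasDerivAt_pow 2 x).const_mul (Real.pi ^ 3)).mul hE).congr_deriv (by ring)
  exact (((h1.add h2).add h3).add h4).congr_deriv (by unfold gAux2; ring)

theorem gAux_second_deriv_pos (y : ℝ) (hy : (1 + Real.sqrt 3) / Real.pi < y) :
    0 < iteratedDeriv 2 gAux y := by
  have hderiv : deriv gAux = gAux1 := funext fun x => (gAux_hasDerivAt x).deriv
  have h2 : iteratedDeriv 2 gAux y = gAux2 y := by
    rw [iteratedDeriv_succ, iteratedDeriv_one, hderiv]
    exact (gAux1_hasDerivAt y).deriv
  rw [h2]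
  have hpi : (0:ℝ) < Real.pi := Real.pi_pos
  have hu : 1 + Real.sqrt 3 < Real.pi * y := by
    rw [div_lt_iff₀ hpi] at hy; linarith [hy]
  have hs3 : Real.sqrt 3 ^ 2 = 3 := Real.sq_sqrt (by norm_num)
  have hs3nn : (0:ℝ) ≤ Real.sqrt 3 := Real.sqrt_nonneg 3
  have hupos : 0 < Real.pi * y := by nlinarith
  have hE : 0 < Real.exp (Real.pi * y) := Real.exp_pos _
  unfold gAux2
  have hbr2 : 0 < Real.pi ^ 2 * y ^ 2 + 8 * Real.pi * y + 6 := by nlinarith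
  have h4 : 0 < 4 * Real.pi ^ 2 * y ^ 2 - 8 * Real.pi * y - 6 := by nlinarith
  positivity
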